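/- arXiv:1711.04750 — 4 statements merged into one kernel-verified Lean document; each statement's English description precedes it below -/
import Mathlib

section
/- For every integer k ≥ 2, every set system 𝒬 ⊆ 𝒫([k]) \ {[k]}, every d ∈ [0,1], every 𝒬-simple k-uniform hypergraph F, and every δ > 0, there exists ε > 0 such that for all sufficiently large n, every n-vertex k-uniform hypergraph H that satisfies DISC_{𝒬,d}(ε) also satisfies CL_{𝒬,d}(F,δ). -/
open Finset
open scoped Classical

/-- `E⃗`: the set of all orderings of the edges of a `k`-uniform hypergraph
with vertex set `Fin n` and edge set `E`. -/
def edgeOrd (k : ℕ) {n : ℕ} (E : Finset (Finset (Fin n))) : Set (Fin k → Fin n) :=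
  {v | Function.Injective v ∧ Finset.image v Finset.univ ∈ E}

/-- The restriction `v_Q` of a `k`-tuple `v` to the coordinates in `Q`. -/
def tupleRestrict {k n : ℕ} (Q : Finset (Fin k)) (v : Fin k → Fin n) :
    {i // i ∈ Q} → Fin n :=
  fun i => v i.1

/-- `𝒦_k(𝒢)`: the ordered `k`-tuples with pairwise distinct entries supported by the
family `G` of `Q`-directed hypergraphs, for `Q` ranging over `𝒬`. -/
def supportedTuples {k n : ℕ} (𝒬 : Finset (Finset (Fin k)))
    (G : (Q : Finset (Fin k)) → Set ({i // i ∈ Q} → Fin n)) : Set (Fin k → Fin n) :=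
  {v | Function.Injective v ∧ ∀ Q ∈ 𝒬, tupleRestrict Q v ∈ G Q}

/-- The property `DISC_{𝒬,d}(ε)` of the `k`-uniform hypergraph on `Fin n` with edge set `E`. -/
def DISC (k n : ℕ) (𝒬 : Finset (Finset (Fin k))) (d ε : ℝ)
    (E : Finset (Finset (Fin n))) : Prop :=
  ∀ G : (Q : Finset (Fin k)) → Set ({i // i ∈ Q} → Fin n),
    |((edgeOrd k E ∩ supportedTuples 𝒬 G).ncard : ℝ) -
        d * ((supportedTuples 𝒬 G).ncard : ℝ)| ≤ ε * (n : ℝ) ^ k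

/-- The product `∏_{Q ∈ 𝒬} w_Q(v_Q)`, where a factor is set to `0` whenever the tuple `v_Q`
has repeated entries. -/
noncomputable def wProd {k n : ℕ} (𝒬 : Finset (Finset (Fin k)))
    (w : (Q : Finset (Fin k)) → (({i // i ∈ Q} → Fin n) → ℝ)) (v : Fin k → Fin n) : ℝ :=
  ∏ Q ∈ 𝒬, if Function.Injective (tupleRestrict Q v) then w Q (tupleRestrict Q v) else 0

/-- The property `WDISC_{𝒬,d}(ε)` of the `k`-uniform hypergraph on `Fin n` with edge set `E`. -/
def WDISC (k n : ℕ) (𝒬 : Finset (Finset (Fin k))) (d ε : ℝ)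
    (E : Finset (Finset (Fin n))) : Prop :=
  ∀ w : (Q : Finset (Fin k)) → (({i // i ∈ Q} → Fin n) → ℝ),
    (∀ Q y, -1 ≤ w Q y ∧ w Q y ≤ 1) →
    |∑ v : Fin k → Fin n,
        ((if v ∈ edgeOrd k E then (1 : ℝ) else 0) - d) * wProd 𝒬 w v| ≤ ε * (n : ℝ) ^ k

/-- `N_F(H)`: the number of labeled copies of the hypergraph `F = (VF, EF)` in the
hypergraph on `Fin n` with edge set `E`. -/
noncomputable def labeledCopies {n : ℕ} (VF : Type) [Fintype VF] [DecidableEq VF]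
    (EF : Finset (Finset VF)) (E : Finset (Finset (Fin n))) : ℕ :=
  Set.ncard {φ : VF → Fin n | Function.Injective φ ∧ ∀ f ∈ EF, Finset.image φ f ∈ E}

/-- The property `CL_{𝒬,d}(F,ε)` for `F = (VF, EF)`. -/
def CL {n : ℕ} (VF : Type) [Fintype VF] [DecidableEq VF]
    (EF : Finset (Finset VF)) (d ε : ℝ) (E : Finset (Finset (Fin n))) : Prop :=
  |(labeledCopies VF EF E : ℝ) - d ^ EF.card * (n : ℝ) ^ Fintype.card VF| ≤
    ε * (n : ℝ) ^ Fintype.card VF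

/-- The hypergraph `F = (VF, EF)` is `𝒬`-simple. -/
def QSimple {k : ℕ} (𝒬 : Finset (Finset (Fin k))) {VF : Type}
    (EF : Finset (Finset VF)) : Prop :=
  ∃ e : Fin EF.card → Finset VF,
    (∀ j, e j ∈ EF) ∧ (∀ f ∈ EF, ∃ j, e j = f) ∧
      ∀ j : Fin EF.card, ∃ x : Fin k → VF,
        Function.Injective x ∧ (∀ r, x r ∈ e j) ∧
          ∀ h : Fin EF.card, h < j →
            ∃ Q ∈ 𝒬, ∀ r : Fin k, x r ∈ e h ∧ x r ∈ e j → r ∈ Q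

/-- The vertex set of `M_𝒬`: the vertex class indexed by `i ∈ [k]` consists of all
functions from `{Q ∈ 𝒬 : i ∉ Q}` to `{0,1}` (this is the result of the successive
doubling operations `db_Q`, `Q ∈ 𝒬`, applied to a single edge `K_k^{(k)}`). -/
abbrev MVertex (k : ℕ) (𝒬 : Finset (Finset (Fin k))) : Type :=
  Σ i : Fin k, ({Q : Finset (Fin k) // Q ∈ 𝒬 ∧ i ∉ Q} → Bool)

/-- The vertex in class `i` of the edge of `M_𝒬` indexed by `a : 𝒬 → {0,1}`. -/
def Mvert {k : ℕ} (𝒬 : Finset (Finset (Fin k))) (a : {Q : Finset (Fin k) // Q ∈ 𝒬} → Bool)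
    (i : Fin k) : MVertex k 𝒬 :=
  ⟨i, fun Q => a ⟨Q.1, Q.2.1⟩⟩

/-- The edge of `M_𝒬` indexed by `a : 𝒬 → {0,1}`. -/
noncomputable def MEdge {k : ℕ} (𝒬 : Finset (Finset (Fin k))) (a : {Q : Finset (Fin k) // Q ∈ 𝒬} → Bool) :
    Finset (MVertex k 𝒬) :=
  Finset.image (Mvert 𝒬 a) Finset.univ

/-- The edge set of `M_𝒬`. -/
noncomputable def MEdges {k : ℕ} (𝒬 : Finset (Finset (Fin k))) : Finset (Finset (MVertex k 𝒬)) :=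
  Finset.image (MEdge 𝒬) Finset.univ

/-- The property `DEV_{𝒬,d}(ε)`:  the sum over all labeled copies `M` of `M_𝒬` in the
complete `k`-uniform hypergraph on `Fin n` of `∏_{f ∈ E(M)} (1_E(f) - d)` is at most
`ε n^{v(M_𝒬)}`. -/
def DEV (k n : ℕ) (𝒬 : Finset (Finset (Fin k))) (d ε : ℝ)
    (E : Finset (Finset (Fin n))) : Prop :=
  ∑ φ ∈ Finset.univ.filter (fun φ : MVertex k 𝒬 → Fin n => Function.Injective φ),
      ∏ f ∈ MEdges 𝒬, ((if Finset.image φ f ∈ E then (1 : ℝ) else 0) - d) ≤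
    ε * (n : ℝ) ^ Fintype.card (MVertex k 𝒬)

/-- `deg_𝒬(i)`: the number of sets in `𝒬` containing `i`. -/
def degQ {k : ℕ} (𝒬 : Finset (Finset (Fin k))) (i : Fin k) : ℕ :=
  (𝒬.filter fun Q => i ∈ Q).card

/-- `𝒜(𝒬)`: the antichain of inclusion-maximal elements of `𝒬`. -/
def maxElems {k : ℕ} (𝒬 : Finset (Finset (Fin k))) : Finset (Finset (Fin k)) :=
  𝒬.filter fun Q => ∀ Q' ∈ 𝒬, Q ⊆ Q' → Q = Q'

/-- The hypergraph `H^{(k)}(ℬ)`: a `k`-set `s ⊆ [n]` is an edge iff the number of `Q ∈ 𝒬`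
such that the restriction of the natural (increasing) ordering of `s` to the positions
in `Q` is an ordering of a member of `ℬ` is odd. -/
noncomputable def HkB (k i : ℕ) {n : ℕ} (𝒬 : Finset (Finset (Fin k))) (ℬ : Finset (Finset (Fin n))) :
    Finset (Finset (Fin n)) :=
  (Finset.powersetCard k (Finset.univ : Finset (Fin n))).filter fun s =>
    if h : s.card = k then
      Odd (𝒬.filter fun Q =>
        Finset.image (fun q : Fin k => (s.orderIsoOfFin h q : Fin n)) Q ∈ ℬ).card
    else False

/-- The `i`-th vertex class of the `Q`-doubling of a `k`-partite hypergraph with vertex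
classes `X`. -/
def dbClass {k : ℕ} (Q : Finset (Fin k)) (X : Fin k → Type) (i : Fin k) : Type :=
  if i ∈ Q then X i else X i × Bool

/-- The vertex of `db_Q(F)` in class `i` arising from the vertex `x` and `a ∈ {0,1}`. -/
def dbVertex {k : ℕ} (Q : Finset (Fin k)) (X : Fin k → Type) (i : Fin k)
    (x : X i) (a : Bool) : dbClass Q X i :=
  if h : i ∈ Q then cast (if_pos h).symm x else cast (if_neg h).symm (x, a)

/-- The edge set of the `Q`-doubling `db_Q(F)` of the `k`-partite `k`-uniform hypergraph
with vertex classes `X` and edge set `E` (edges are recorded as one vertex from each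
class). -/
def dbEdges {k : ℕ} (Q : Finset (Fin k)) (X : Fin k → Type) (E : Set (∀ i, X i)) :
    Set (∀ i, dbClass Q X i) :=
  {y | ∃ e ∈ E, ∃ a : Bool, ∀ i, y i = dbVertex Q X i (e i) a}
lemma descBound : ∀ (j n : ℕ), n ^ j ≤ n.descFactorial j + j^2 * n ^ (j-1) := by
  intro j
  induction j with
  | zero => intro n; simp
  | succ p ih =>
    intro n
    have h1 : n ^ (p+1) = n * n ^ p := by ring
    have h2 := ih n
    have h3 : n * n ^ p ≤ n * (n.descFactorial p + p^2 * n ^ (p-1)) :=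
      Nat.mul_le_mul_left n h2
    have hdesc : n.descFactorial p ≤ n ^ p := Nat.descFactorial_le_pow n p
    have h4 : n * n.descFactorial p ≤ n.descFactorial (p+1) + (p+1) * n ^ p := by
      rcases Nat.lt_or_ge n p with h | h
      · have : n.descFactorial p = 0 := by
          apply Nat.descFactorial_eq_zero_iff_lt.mpr h
        simp [this]
      · have : n.descFactorial (p+1) = (n - p) * n.descFactorial p := by
          simp [Nat.descFactorial_succ]
        rw [this]
        have : n * n.descFactorial p = (n - p) * n.descFactorial p + p * n.descFactorial p := by
          rw [← Nat.add_mul]; congr 1; omega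
        rw [this]
        have : p * n.descFactorial p ≤ (p+1) * n ^ p := by
          calc p * n.descFactorial p ≤ p * n ^ p := Nat.mul_le_mul_left p hdesc
          _ ≤ (p+1) * n ^ p := Nat.mul_le_mul_right _ (by omega)
        omega
    have h5 : p^2 * n ^ (p-1) * n ≤ p^2 * n ^ p := by
      rcases Nat.eq_zero_or_pos p with hp | hp
      · simp [hp]
      · have : n ^ (p-1) * n = n ^ p := by
          rw [← pow_succ]; congr 1; omega
        rw [mul_assoc, this]
    have h6 : n ^ (p+1) ≤ n * n.descFactorial p + p^2 * n^(p-1) * n := by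
      rw [h1]; calc n * n^p ≤ n * (n.descFactorial p + p^2 * n^(p-1)) := h3
      _ = n * n.descFactorial p + p^2 * n^(p-1) * n := by ring
    have h7 : (p+1) * n^p + p^2 * n^p ≤ (p+1)^2 * n^p := by
      rw [← Nat.add_mul]; apply Nat.mul_le_mul_right; nlinarith
    simp only [Nat.add_sub_cancel]
    omega

lemma cardNotInj (α β : Type*) [Fintype α] [DecidableEq α] [Fintype β]
    [DecidablePred fun f : α → β => Function.Injective f] :
    ((Finset.univ.filter fun f : α → β => ¬ Function.Injective f).card : ℕ) ≤
      (Fintype.card α)^2 * (Fintype.card β) ^ (Fintype.card α - 1) := by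
  have hinj : (Finset.univ.filter fun f : α → β => Function.Injective f).card
      = (Fintype.card β).descFactorial (Fintype.card α) := by
    rw [← Fintype.card_embedding_eq (α := α) (β := β), ← Fintype.card_subtype]
    exact Fintype.card_congr (Equiv.subtypeInjectiveEquivEmbedding α β)
  have htot : (Finset.univ.filter fun f : α → β => ¬ Function.Injective f).card
      + (Finset.univ.filter fun f : α → β => Function.Injective f).card
      = (Fintype.card β) ^ (Fintype.card α) := by
    have h := Finset.card_filter_add_card_filter_not (s := (Finset.univ : Finset (α → β)))
      (p := fun f : α → β => Function.Injective f)
    rw [Finset.card_univ, Fintype.card_fun] at h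
    omega
  have hd := descBound (Fintype.card α) (Fintype.card β)
  omega

lemma telescope (d B : ℝ) (hd0 : 0 ≤ d) (hd1 : d ≤ 1) :
    ∀ (m : ℕ) (S : ℕ → ℝ), (∀ i < m, |S (i+1) - d * S i| ≤ B) →
      |S m - d ^ m * S 0| ≤ m * B := by
  intro m
  induction m with
  | zero => intro S _; simp
  | succ p ih =>
    intro S hS
    have h1 : |S p - d ^ p * S 0| ≤ p * B := ih S (fun i hi => hS i (by omega))
    have h2 : |S (p+1) - d * S p| ≤ B := hS p (by omega)
    have : S (p+1) - d^(p+1) * S 0 = (S (p+1) - d * S p) + d * (S p - d^p * S 0) := by ring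
    rw [this]
    calc |(S (p+1) - d * S p) + d * (S p - d^p * S 0)|
        ≤ |S (p+1) - d * S p| + |d * (S p - d^p * S 0)| := abs_add_le _ _
      _ ≤ B + 1 * (p * B) := by
          rw [abs_mul, abs_of_nonneg hd0]
          gcongr
      _ = (p+1 : ℕ) * B := by push_cast; ring

set_option maxHeartbeats 1000000 in
/-- `DISC ⟹ CL` for `𝒬`-simple `F`. -/
theorem disc_implies_cl (k : ℕ) (hk : 2 ≤ k) (𝒬 : Finset (Finset (Fin k)))
    (h𝒬 : Finset.univ ∉ 𝒬) (d : ℝ) (hd0 : 0 ≤ d) (hd1 : d ≤ 1)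
    (VF : Type) [Fintype VF] [DecidableEq VF] (EF : Finset (Finset VF))
    (hunif : ∀ f ∈ EF, f.card = k) (hsimple : QSimple 𝒬 EF) (δ : ℝ) (hδ : 0 < δ) :
    ∃ ε > (0 : ℝ), ∃ n₀ : ℕ, ∀ n ≥ n₀, ∀ E : Finset (Finset (Fin n)),
      (∀ e ∈ E, e.card = k) → DISC k n 𝒬 d ε E → CL VF EF d δ E := by
  classical
  set m := EF.card with hm
  set V := Fintype.card VF with hV
  refine ⟨δ / (2 * (m + 1)), by positivity, Nat.ceil ((2 * (m * k^2 + V^2) + 2 : ℝ) / δ) + 1, ?_⟩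
  intro n hn E hE hdisc
  by_cases hV0 : V = 0
  · -- VF is empty
    have hVFempty : IsEmpty VF := by
      rwa [← Fintype.card_eq_zero_iff, ← hV]
    have hEF : EF = ∅ := by
      rw [Finset.eq_empty_iff_forall_notMem]
      intro f hf
      have h1 := hunif f hf
      have h2 : f = ∅ := Finset.eq_empty_of_isEmpty f
      rw [h2] at h1; simp at h1; omega
    have hlc : labeledCopies VF EF E = 1 := by
      unfold labeledCopies
      rw [hEF]
      have hset : {φ : VF → Fin n | Function.Injective φ ∧ ∀ f ∈ (∅ : Finset (Finset VF)), Finset.image φ f ∈ E} = Set.univ := by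
        ext φ
        constructor
        · intro _; trivial
        · intro _
          exact ⟨fun a b _ => (hVFempty.false a).elim, fun f hf => by simp at hf⟩
      rw [hset, Set.ncard_univ]
      simp [Nat.card_eq_fintype_card, Fintype.card_fun, ← hV, hV0]
    unfold CL
    rw [hlc, hEF, ← hV, hV0]
    simp
    positivity
  have hV1 : 1 ≤ V := by omega
  set ε : ℝ := δ / (2 * (m + 1)) with hε
  have hn1 : 1 ≤ n := le_trans (by omega) hn
  have hnR : (1 : ℝ) ≤ n := by exact_mod_cast hn1
  have hnbig : 2 * ((m : ℝ) * k^2 + V^2) + 2 ≤ δ * n := by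
    rw [mul_comm δ]
    calc (2 * ((m:ℝ) * k^2 + V^2) + 2) = (2 * (m * k^2 + V^2) + 2 : ℝ) := by push_cast; ring
    _ ≤ (Nat.ceil ((2 * ((m:ℕ) * k^2 + (V:ℕ)^2) + 2 : ℝ) / δ) + 1 : ℕ) * δ := by
        set x : ℝ := (2 * ((m:ℕ) * k^2 + (V:ℕ)^2) + 2 : ℝ) with hxdef
        have hx0 : x = 2 * ((m:ℕ) * k^2 + (V:ℕ)^2) + 2 := rfl
        have h1 : x / δ ≤ (Nat.ceil (x / δ) : ℝ) := Nat.le_ceil _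
        have h2 : x ≤ (Nat.ceil (x/δ) : ℝ) * δ := by
          rw [← div_le_iff₀ hδ] at *
          exact h1
        calc x ≤ (Nat.ceil (x/δ) : ℝ) * δ := h2
        _ ≤ ((Nat.ceil (x/δ) + 1 : ℕ) : ℝ) * δ := by
            apply mul_le_mul_of_nonneg_right _ hδ.le
            push_cast; linarith
        
    _ ≤ n * δ := by
        apply mul_le_mul_of_nonneg_right _ hδ.le
        exact_mod_cast hn
  obtain ⟨e, he_mem, he_surj, hx⟩ := hsimple
  set ind : Fin m → (VF → Fin n) → ℝ :=
    fun j φ => if Finset.image φ (e j) ∈ E then 1 else 0 with hind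
  set S : ℕ → ℝ :=
    fun i => ∑ φ : VF → Fin n,
      ∏ j ∈ Finset.univ.filter (fun j : Fin m => (j : ℕ) < i), ind j φ with hS
  have hS0 : S 0 = (n : ℝ) ^ V := by
    have hfil : Finset.univ.filter (fun j : Fin m => (j : ℕ) < 0) = ∅ := by
      simp
    simp only [hS, hfil, Finset.prod_empty, Finset.sum_const, Finset.card_univ, nsmul_eq_mul, mul_one]
    rw [Fintype.card_fun]
    push_cast
    simp [hV]
  -- counting lemma relating S m and labeledCopies
  have hSm : |S m - (labeledCopies VF EF E : ℝ)| ≤ (V^2 : ℝ) * (n:ℝ) ^ (V - 1) := by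
    set A := (Finset.univ.filter fun φ : VF → Fin n => ∀ f ∈ EF, Finset.image φ f ∈ E).card with hA
    set L := (Finset.univ.filter fun φ : VF → Fin n =>
      Function.Injective φ ∧ ∀ f ∈ EF, Finset.image φ f ∈ E).card with hL
    have hfilm : Finset.univ.filter (fun j : Fin m => (j:ℕ) < m) = Finset.univ := by
      ext j; simp [j.isLt]
    have hSmA : S m = (A : ℝ) := by
      calc S m = ∑ φ : VF → Fin n, if (∀ f ∈ EF, Finset.image φ f ∈ E) then (1:ℝ) else 0 := by
            apply Finset.sum_congr rfl
            intro φ _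
            rw [hfilm]
            by_cases hgood : ∀ f ∈ EF, Finset.image φ f ∈ E
            · rw [if_pos hgood]
              apply Finset.prod_eq_one
              intro j _
              simp only [hind]
              rw [if_pos (hgood _ (he_mem j))]
            · rw [if_neg hgood]
              push_neg at hgood
              obtain ⟨f, hf, hbad⟩ := hgood
              obtain ⟨j, hj⟩ := he_surj f hf
              apply Finset.prod_eq_zero (Finset.mem_univ j)
              simp only [hind]
              rw [hj, if_neg hbad]
        _ = (A : ℝ) := by
            rw [← Finset.sum_filter]
            simp [hA]
    have hlc : labeledCopies VF EF E = L := by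
      unfold labeledCopies
      rw [Set.ncard_eq_toFinset_card']
      simp [Set.toFinset_setOf, hL]
    have hLA : L ≤ A := by
      apply Finset.card_le_card
      apply Finset.monotone_filter_right
      intro φ _ h
      exact h.2
    have hnotinj := cardNotInj VF (Fin n)
    rw [Fintype.card_fin, ← hV] at hnotinj
    have hAL : A ≤ L + (Finset.univ.filter fun φ : VF → Fin n => ¬ Function.Injective φ).card := by
      have hsub : Finset.univ.filter (fun φ : VF → Fin n => ∀ f ∈ EF, Finset.image φ f ∈ E) ⊆
          (Finset.univ.filter fun φ : VF → Fin n =>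
            Function.Injective φ ∧ ∀ f ∈ EF, Finset.image φ f ∈ E) ∪
          (Finset.univ.filter fun φ : VF → Fin n => ¬ Function.Injective φ) := by
        intro φ hφ
        simp only [Finset.mem_filter, Finset.mem_union, Finset.mem_univ, true_and] at *
        by_cases hinj : Function.Injective φ
        · exact Or.inl ⟨hinj, hφ⟩
        · exact Or.inr hinj
      exact le_trans (Finset.card_le_card hsub) (Finset.card_union_le _ _)
    have hAL2 : A ≤ L + V^2 * n^(V-1) := le_trans hAL (Nat.add_le_add_left hnotinj L)
    rw [hSmA, hlc]
    rw [abs_sub_le_iff]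
    constructor
    · have : ((A:ℝ) - L) ≤ ((V^2 * n^(V-1) : ℕ) : ℝ) := by
        have : (A:ℝ) ≤ (L:ℝ) + ((V^2 * n^(V-1) : ℕ):ℝ) := by exact_mod_cast hAL2
        linarith
      calc (A:ℝ) - L ≤ ((V^2 * n^(V-1) : ℕ) : ℝ) := this
      _ = (V^2 : ℝ) * (n:ℝ)^(V-1) := by push_cast; ring
    · have h1 : (L:ℝ) ≤ (A:ℝ) := by exact_mod_cast hLA
      have h2 : (0:ℝ) ≤ (V^2:ℝ) * (n:ℝ)^(V-1) := by positivity
      linarith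
  -- main step estimate
  have hstep : ∀ i < m, |S (i+1) - d * S i| ≤ ε * (n:ℝ)^V + (k^2 : ℝ) * (n:ℝ)^(V-1) := by
    intro i hi
    set jI : Fin m := ⟨i, hi⟩ with hjI
    obtain ⟨x, hxinj, hxmem, hprev⟩ := hx jI
    set fi := e jI with hfi
    have hficard : fi.card = k := hunif _ (he_mem jI)
    have hkV : k ≤ V := by
      rw [← hficard, hV]; exact Finset.card_le_univ fi
    have hk1 : 1 ≤ k := by omega
    -- the bijection between `Fin k` and the vertices of `fi`
    have hcardsub : Fintype.card {y // y ∈ fi} = k := by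
      rw [Fintype.card_coe, hficard]
    have hbij : Function.Bijective (fun r : Fin k => (⟨x r, hxmem r⟩ : {y // y ∈ fi})) := by
      rw [Fintype.bijective_iff_injective_and_card]
      constructor
      · intro a b hab
        exact hxinj (congrArg Subtype.val hab)
      · simp [hcardsub]
    set c : Fin k ≃ {y // y ∈ fi} := Equiv.ofBijective _ hbij with hc
    have hcsymm : ∀ z : {y // y ∈ fi}, x (c.symm z) = z := by
      intro z
      exact congrArg Subtype.val (c.apply_symm_apply z)
    set glue : (Fin k → Fin n) → ({y : VF // y ∉ fi} → Fin n) → VF → Fin n :=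
      fun v ψ y => if hy : y ∈ fi then v (c.symm ⟨y, hy⟩) else ψ ⟨y, hy⟩ with hglue
    have hglue_x : ∀ v ψ r, glue v ψ (x r) = v r := by
      intro v ψ r
      simp only [hglue]
      rw [dif_pos (hxmem r)]
      congr 1
      have h0 : (⟨x r, hxmem r⟩ : {y // y ∈ fi}) = c r := rfl
      rw [h0, c.symm_apply_apply]
    have hbijglue : Function.Bijective
        (fun p : ({y : VF // y ∉ fi} → Fin n) × (Fin k → Fin n) => glue p.2 p.1) := by
      constructor
      · intro p q hpq
        have hv : p.2 = q.2 := by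
          funext r
          rw [← hglue_x p.2 p.1 r, ← hglue_x q.2 q.1 r]
          exact congrFun hpq (x r)
        have hψ : p.1 = q.1 := by
          funext y
          have h1 : glue p.2 p.1 y.1 = glue q.2 q.1 y.1 := congrFun hpq y.1
          simp only [hglue] at h1
          rwa [dif_neg y.2, dif_neg y.2] at h1
        exact Prod.ext hψ hv
      · intro φ
        refine ⟨⟨fun y => φ y.1, fun r => φ (x r)⟩, ?_⟩
        funext y
        by_cases hy : y ∈ fi
        · simp only [hglue]
          rw [dif_pos hy]
          exact congrArg φ (hcsymm ⟨y, hy⟩)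
        · simp only [hglue]
          rw [dif_neg hy]
    -- image along fi
    have hxim : Finset.image x Finset.univ = fi := by
      apply Finset.eq_of_subset_of_card_le
      · intro y hy
        obtain ⟨r, _, hr⟩ := Finset.mem_image.mp hy
        exact hr ▸ hxmem r
      · rw [Finset.card_image_of_injective _ hxinj, Finset.card_univ, Fintype.card_fin, hficard]
    have himg_fi : ∀ v ψ, Finset.image (glue v ψ) fi = Finset.image v Finset.univ := by
      intro v ψ
      rw [← hxim, Finset.image_image]
      congr 1
      funext r
      exact hglue_x v ψ r
    -- algebraic step
    have hsplit : S (i+1) - d * S i =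
        ∑ φ : VF → Fin n,
          (∏ j ∈ Finset.univ.filter (fun j : Fin m => (j:ℕ) < i), ind j φ) * (ind jI φ - d) := by
      have hfil : Finset.univ.filter (fun j : Fin m => (j:ℕ) < i+1)
          = insert jI (Finset.univ.filter (fun j : Fin m => (j:ℕ) < i)) := by
        ext j
        simp only [Finset.mem_filter, Finset.mem_insert, Finset.mem_univ, true_and]
        constructor
        · intro hj
          rcases Nat.lt_or_ge (j:ℕ) i with h | h
          · exact Or.inr h
          · left
            apply Fin.ext
            simp only [hjI]
            omega
        · rintro (rfl | hj)
          · simp only [hjI]; omega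
          · omega
      have hnotmem : jI ∉ Finset.univ.filter (fun j : Fin m => (j:ℕ) < i) := by
        simp [hjI]
      simp only [hS, hfil]
      rw [Finset.mul_sum, ← Finset.sum_sub_distrib]
      apply Finset.sum_congr rfl
      intro φ _
      rw [Finset.prod_insert hnotmem]
      ring
    -- choose the sets Q for earlier edges
    choose Qsel hQmem hQprop using hprev
    set z : Fin n := ⟨0, by omega⟩ with hz
    -- the inner estimate
    have hInner : ∀ ψ : {y : VF // y ∉ fi} → Fin n,
        |∑ v : Fin k → Fin n,
          (∏ j ∈ Finset.univ.filter (fun j : Fin m => (j:ℕ) < i), ind j (glue v ψ)) *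
            (ind jI (glue v ψ) - d)| ≤ ε * (n:ℝ)^k + (k^2 : ℝ) * (n:ℝ)^(k-1) := by
      intro ψ
      set G : (Q : Finset (Fin k)) → Set ({r // r ∈ Q} → Fin n) := fun Q =>
        {u | ∀ (h : Fin m) (hh : h < jI), Qsel h hh = Q →
          Finset.image (glue (fun r => if hr : r ∈ Q then u ⟨r, hr⟩ else z) ψ) (e h) ∈ E} with hG
      have hkey : ∀ (v : Fin k → Fin n) (h : Fin m) (hh : h < jI) (Q : Finset (Fin k)),
          Qsel h hh = Q →
          Finset.image (glue (fun r => if hr : r ∈ Q then tupleRestrict Q v ⟨r, hr⟩ else z) ψ) (e h)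
            = Finset.image (glue v ψ) (e h) := by
        intro v h hh Q hQ
        apply Finset.image_congr
        intro y hy
        rw [Finset.mem_coe] at hy
        simp only [hglue]
        by_cases hyfi : y ∈ fi
        · rw [dif_pos hyfi, dif_pos hyfi]
          have hxr : x (c.symm ⟨y, hyfi⟩) = y := hcsymm ⟨y, hyfi⟩
          have hrQ : c.symm ⟨y, hyfi⟩ ∈ Q := by
            rw [← hQ]
            apply hQprop h hh
            rw [hxr]
            exact ⟨hy, hyfi⟩
          rw [dif_pos hrQ]
          rfl
        · rw [dif_neg hyfi, dif_neg hyfi]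
      set P : (Fin k → Fin n) → Prop :=
        fun v => ∀ (h : Fin m), h < jI → Finset.image (glue v ψ) (e h) ∈ E with hP
      set R : (Fin k → Fin n) → Prop :=
        fun v => Finset.image (glue v ψ) fi ∈ E with hR
      have hsupp : supportedTuples 𝒬 G = {v | Function.Injective v ∧ P v} := by
        ext v
        simp only [supportedTuples, Set.mem_setOf_eq, hG, hP]
        constructor
        · rintro ⟨hvinj, hGv⟩
          refine ⟨hvinj, fun h hh => ?_⟩
          have h0 := hGv (Qsel h hh) (hQmem h hh) h hh rfl
          rwa [hkey v h hh _ rfl] at h0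
        · rintro ⟨hvinj, hall⟩
          refine ⟨hvinj, fun Q hQ h hh hsel => ?_⟩
          rw [hkey v h hh Q hsel]
          exact hall h hh
      have hedge : edgeOrd k E ∩ supportedTuples 𝒬 G
          = {v | Function.Injective v ∧ (P v ∧ R v)} := by
        rw [hsupp]
        ext v
        simp only [edgeOrd, Set.mem_inter_iff, Set.mem_setOf_eq, hR, himg_fi]
        tauto
      have hncard1 : ((supportedTuples 𝒬 G).ncard : ℝ)
          = ((Finset.univ.filter fun v : Fin k → Fin n => Function.Injective v ∧ P v).card : ℝ) := by
        rw [hsupp, Set.ncard_eq_toFinset_card']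
        simp [Set.toFinset_setOf]
      have hncard2 : (((edgeOrd k E ∩ supportedTuples 𝒬 G).ncard : ℕ) : ℝ)
          = ((Finset.univ.filter fun v : Fin k → Fin n =>
              Function.Injective v ∧ (P v ∧ R v)).card : ℝ) := by
        rw [hedge, Set.ncard_eq_toFinset_card']
        simp [Set.toFinset_setOf]
      have hdiscG := hdisc G
      -- rewrite the summand
      have hterm : ∀ v : Fin k → Fin n,
          (∏ j ∈ Finset.univ.filter (fun j : Fin m => (j:ℕ) < i), ind j (glue v ψ)) *
            (ind jI (glue v ψ) - d)
          = (if P v ∧ R v then (1:ℝ) else 0) - d * (if P v then (1:ℝ) else 0) := by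
        intro v
        have hprodv : (∏ j ∈ Finset.univ.filter (fun j : Fin m => (j:ℕ) < i), ind j (glue v ψ))
            = if P v then (1:ℝ) else 0 := by
          by_cases hPv : P v
          · rw [if_pos hPv]
            apply Finset.prod_eq_one
            intro j hj
            have hji : (j:ℕ) < i := (Finset.mem_filter.mp hj).2
            have hjlt : j < jI := by rw [Fin.lt_def]; simp only [hjI]; omega
            simp only [hind]
            rw [if_pos (hPv j hjlt)]
          · rw [if_neg hPv]
            simp only [hP] at hPv
            push_neg at hPv
            obtain ⟨h, hh, hbad⟩ := hPv
            have hmem : h ∈ Finset.univ.filter (fun j : Fin m => (j:ℕ) < i) := by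
              rw [Fin.lt_def] at hh
              simp only [hjI] at hh
              simp [hh]
            apply Finset.prod_eq_zero hmem
            simp only [hind]
            rw [if_neg hbad]
        have hindI : ind jI (glue v ψ) = if R v then (1:ℝ) else 0 := rfl
        rw [hprodv, hindI]
        by_cases hPv : P v <;> by_cases hRv : R v
        · rw [if_pos hPv, if_pos hRv, if_pos (show P v ∧ R v from ⟨hPv, hRv⟩)]; ring
        · rw [if_pos hPv, if_neg hRv, if_neg (show ¬(P v ∧ R v) from fun hc => hRv hc.2)]; ring
        · rw [if_neg hPv, if_pos hRv, if_neg (show ¬(P v ∧ R v) from fun hc => hPv hc.1)]; ring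
        · rw [if_neg hPv, if_neg (show ¬(P v ∧ R v) from fun hc => hPv hc.1)]; ring
      rw [Finset.sum_congr rfl (fun v _ => hterm v)]
      rw [Finset.sum_sub_distrib, ← Finset.mul_sum]
      have hR_inj : ∀ v : Fin k → Fin n, R v → Function.Injective v := by
        intro v hRv
        simp only [hR] at hRv
        rw [himg_fi] at hRv
        have hcard := hE _ hRv
        have hinj : Set.InjOn v ↑(Finset.univ : Finset (Fin k)) := by
          apply Finset.injOn_of_card_image_eq
          rw [hcard, Finset.card_univ, Fintype.card_fin]
        rw [Finset.coe_univ] at hinj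
        exact Set.injOn_univ.mp hinj
      have hsum1 : (∑ v : Fin k → Fin n, if P v ∧ R v then (1:ℝ) else 0)
          = ((Finset.univ.filter fun v : Fin k → Fin n =>
              Function.Injective v ∧ (P v ∧ R v)).card : ℝ) := by
        rw [← Finset.sum_filter, Finset.sum_const, nsmul_eq_mul, mul_one]
        have hfeq : (Finset.univ.filter fun v : Fin k → Fin n => P v ∧ R v)
            = (Finset.univ.filter fun v : Fin k → Fin n =>
                Function.Injective v ∧ (P v ∧ R v)) := by
          apply Finset.filter_congr
          intro v _
          constructor
          · intro hv; exact ⟨hR_inj v hv.2, hv⟩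
          · intro hv; exact hv.2
        rw [hfeq]
      have hsum2 : (∑ v : Fin k → Fin n, if P v then (1:ℝ) else 0)
          = ((Finset.univ.filter fun v : Fin k → Fin n =>
                Function.Injective v ∧ P v).card : ℝ)
            + ((Finset.univ.filter fun v : Fin k → Fin n =>
                ¬ Function.Injective v ∧ P v).card : ℝ) := by
        rw [← Finset.sum_filter, Finset.sum_const, nsmul_eq_mul, mul_one]
        have h0 := Finset.card_filter_add_card_filter_not
          (s := (Finset.univ.filter fun v : Fin k → Fin n => P v))
          (p := fun v : Fin k → Fin n => Function.Injective v)
        rw [Finset.filter_filter, Finset.filter_filter] at h0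
        have e1 : (Finset.univ.filter fun v : Fin k → Fin n => P v ∧ Function.Injective v)
            = (Finset.univ.filter fun v : Fin k → Fin n => Function.Injective v ∧ P v) := by
          apply Finset.filter_congr; intro v _; exact and_comm
        have e2 : (Finset.univ.filter fun v : Fin k → Fin n => P v ∧ ¬ Function.Injective v)
            = (Finset.univ.filter fun v : Fin k → Fin n => ¬ Function.Injective v ∧ P v) := by
          apply Finset.filter_congr; intro v _; exact and_comm
        rw [e1, e2] at h0
        exact_mod_cast h0.symm
      rw [hsum1, hsum2]
      rw [hncard1, hncard2] at hdiscG
      have hnoninjk := cardNotInj (Fin k) (Fin n)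
      rw [Fintype.card_fin, Fintype.card_fin] at hnoninjk
      have hCle : ((Finset.univ.filter fun v : Fin k → Fin n =>
            ¬ Function.Injective v ∧ P v).card : ℝ) ≤ (k^2 : ℝ) * (n:ℝ)^(k-1) := by
        have h1 : (Finset.univ.filter fun v : Fin k → Fin n =>
            ¬ Function.Injective v ∧ P v).card
            ≤ (Finset.univ.filter fun v : Fin k → Fin n => ¬ Function.Injective v).card := by
          apply Finset.card_le_card
          apply Finset.monotone_filter_right
          intro v _ hv
          exact hv.1
        have h2 := le_trans h1 hnoninjk
        calc ((Finset.univ.filter fun v : Fin k → Fin n =>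
              ¬ Function.Injective v ∧ P v).card : ℝ)
            ≤ ((k^2 * n^(k-1) : ℕ) : ℝ) := by exact_mod_cast h2
          _ = (k^2 : ℝ) * (n:ℝ)^(k-1) := by push_cast; ring
      set A1 : ℝ := ((Finset.univ.filter fun v : Fin k → Fin n =>
          Function.Injective v ∧ (P v ∧ R v)).card : ℝ)
      set B1 : ℝ := ((Finset.univ.filter fun v : Fin k → Fin n =>
          Function.Injective v ∧ P v).card : ℝ)
      set C1 : ℝ := ((Finset.univ.filter fun v : Fin k → Fin n =>
          ¬ Function.Injective v ∧ P v).card : ℝ)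
      have hC1nonneg : 0 ≤ C1 := Nat.cast_nonneg _
      have heq : A1 - d * (B1 + C1) = (A1 - d * B1) - d * C1 := by ring
      rw [heq]
      calc |(A1 - d * B1) - d * C1| ≤ |A1 - d * B1| + |d * C1| := abs_sub _ _
        _ ≤ ε * (n:ℝ)^k + (k^2 : ℝ) * (n:ℝ)^(k-1) := by
            apply add_le_add hdiscG
            rw [abs_mul, abs_of_nonneg hd0, abs_of_nonneg hC1nonneg]
            calc d * C1 ≤ 1 * C1 := mul_le_mul_of_nonneg_right hd1 hC1nonneg
              _ = C1 := one_mul C1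
              _ ≤ (k^2 : ℝ) * (n:ℝ)^(k-1) := hCle
    -- assemble the step
    rw [hsplit]
    have hre : (∑ φ : VF → Fin n,
          (∏ j ∈ Finset.univ.filter (fun j : Fin m => (j:ℕ) < i), ind j φ) * (ind jI φ - d))
        = ∑ p : ({y : VF // y ∉ fi} → Fin n) × (Fin k → Fin n),
            (∏ j ∈ Finset.univ.filter (fun j : Fin m => (j:ℕ) < i), ind j (glue p.2 p.1)) *
              (ind jI (glue p.2 p.1) - d) :=
      (Fintype.sum_bijective _ hbijglue _ _ (fun p => rfl)).symm
    rw [hre, Fintype.sum_prod_type]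
    have hcardψ : (Fintype.card ({y : VF // y ∉ fi} → Fin n)) = n ^ (V - k) := by
      rw [Fintype.card_fun, Fintype.card_fin]
      congr 1
      rw [Fintype.card_subtype_compl, Fintype.card_coe, hficard, hV]
    have hpowa : (n:ℝ)^(V-k) * (n:ℝ)^k = (n:ℝ)^V := by
      rw [← pow_add]; congr 1; omega
    have hpowb : (n:ℝ)^(V-k) * (n:ℝ)^(k-1) = (n:ℝ)^(V-1) := by
      rw [← pow_add]; congr 1; omega
    calc |∑ ψ : {y : VF // y ∉ fi} → Fin n, ∑ v : Fin k → Fin n,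
          (∏ j ∈ Finset.univ.filter (fun j : Fin m => (j:ℕ) < i), ind j (glue v ψ)) *
            (ind jI (glue v ψ) - d)|
        ≤ ∑ ψ : {y : VF // y ∉ fi} → Fin n, |∑ v : Fin k → Fin n,
          (∏ j ∈ Finset.univ.filter (fun j : Fin m => (j:ℕ) < i), ind j (glue v ψ)) *
            (ind jI (glue v ψ) - d)| := Finset.abs_sum_le_sum_abs _ _
      _ ≤ ∑ _ψ : {y : VF // y ∉ fi} → Fin n, (ε * (n:ℝ)^k + (k^2 : ℝ) * (n:ℝ)^(k-1)) :=
          Finset.sum_le_sum (fun ψ _ => hInner ψ)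
      _ = ((n:ℝ)^(V-k)) * (ε * (n:ℝ)^k + (k^2 : ℝ) * (n:ℝ)^(k-1)) := by
          rw [Finset.sum_const, Finset.card_univ, hcardψ, nsmul_eq_mul]
          push_cast
          ring
      _ = ε * (n:ℝ)^V + (k^2 : ℝ) * (n:ℝ)^(V-1) := by
          rw [mul_add]
          rw [show (n:ℝ)^(V-k) * (ε * (n:ℝ)^k) = ε * ((n:ℝ)^(V-k) * (n:ℝ)^k) by ring,
            show (n:ℝ)^(V-k) * ((k^2:ℝ) * (n:ℝ)^(k-1)) = (k^2:ℝ) * ((n:ℝ)^(V-k) * (n:ℝ)^(k-1)) by ring,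
            hpowa, hpowb]
  have htel := telescope d (ε * (n:ℝ)^V + (k^2 : ℝ) * (n:ℝ)^(V-1)) hd0 hd1 m S hstep
  rw [hS0] at htel
  -- combine
  unfold CL
  rw [← hm, ← hV]
  have hnpos : (0:ℝ) < (n:ℝ) := by linarith
  have hpowpos : (0:ℝ) < (n:ℝ)^V := pow_pos hnpos V
  have hpow1 : (n:ℝ)^(V-1) * n = (n:ℝ)^V := by
    rw [← pow_succ]
    congr 1
    omega
  calc |(labeledCopies VF EF E : ℝ) - d ^ m * (n:ℝ)^V|
      ≤ |S m - (labeledCopies VF EF E : ℝ)| + |S m - d ^ m * (n:ℝ)^V| := by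
        have hr : (labeledCopies VF EF E : ℝ) - d ^ m * (n:ℝ)^V =
            (S m - d ^ m * (n:ℝ)^V) - (S m - (labeledCopies VF EF E : ℝ)) := by ring
        rw [hr]
        exact (abs_sub _ _).trans (by rw [add_comm])
    _ ≤ (V^2 : ℝ) * (n:ℝ)^(V-1) + m * (ε * (n:ℝ)^V + (k^2:ℝ) * (n:ℝ)^(V-1)) := by
        exact add_le_add hSm htel
    _ ≤ δ * (n:ℝ)^V := by
        have hb1 : ((V:ℝ)^2 + (m:ℝ) * (k:ℝ)^2) * (n:ℝ)^(V-1) ≤ (δ/2) * (n:ℝ)^V := by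
          rw [← hpow1, ← mul_assoc]
          rw [mul_comm (δ/2) ((n:ℝ)^(V-1)), mul_comm _ ((n:ℝ)^(V-1)), mul_assoc]
          apply mul_le_mul_of_nonneg_left _ (by positivity)
          nlinarith [hnbig]
        have hb2 : (m:ℝ) * ε ≤ δ/2 := by
          rw [hε, ← mul_div_assoc]
          rw [div_le_div_iff₀ (by positivity) (by norm_num : (0:ℝ) < 2)]
          nlinarith [hδ.le, Nat.cast_nonneg (α := ℝ) m]
        have hmεn : (m:ℝ) * (ε * (n:ℝ)^V) ≤ (δ/2) * (n:ℝ)^V := by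
          rw [← mul_assoc]
          exact mul_le_mul_of_nonneg_right hb2 (by positivity)
        nlinarith [hmεn, hb1, pow_pos hnpos V, pow_pos hnpos (V-1)]
end

section
/- For every integer k ≥ 2, every d ∈ [0,1], and every set system 𝒬 ⊆ 𝒫([k]), the properties DISC_{𝒬,d} and DISC_{𝒜(𝒬),d} are equivalent, where 𝒜(𝒬) ⊆ 𝒬 is the antichain of inclusion-maximal elements of 𝒬. Concretely: for every δ > 0 there exist ε > 0 and n₀ such that every n-vertex k-uniform hypergraph with n ≥ n₀ satisfying DISC_{𝒬,d}(ε) satisfies DISC_{𝒜(𝒬),d}(δ), and vice versa with the roles of 𝒬 and 𝒜(𝒬) exchanged. -/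
open Finset
open scoped Classical

lemma exists_maxElem {k : ℕ} (𝒬 : Finset (Finset (Fin k))) {Q : Finset (Fin k)}
    (hQ : Q ∈ 𝒬) : ∃ A ∈ maxElems 𝒬, Q ⊆ A := by
  obtain ⟨A, hA, hmax⟩ :=
    Finset.exists_max_image (𝒬.filter (Q ⊆ ·)) Finset.card ⟨Q, by simp [hQ]⟩
  simp only [Finset.mem_filter] at hA
  refine ⟨A, ?_, hA.2⟩
  simp only [maxElems, Finset.mem_filter]
  refine ⟨hA.1, fun Q' hQ' hsub => Finset.eq_of_subset_of_card_le hsub ?_⟩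
  have := hmax Q' (Finset.mem_filter.mpr ⟨hQ', hA.2.trans hsub⟩)
  exact this

/-- `DISC_{𝒬,d}` and `DISC_{𝒜(𝒬),d}` are equivalent, where `𝒜(𝒬)` is
the antichain of inclusion-maximal elements of `𝒬`. -/
theorem disc_iff_disc_maxElems (k : ℕ) (hk : 2 ≤ k) (d : ℝ) (hd0 : 0 ≤ d) (hd1 : d ≤ 1)
    (𝒬 : Finset (Finset (Fin k))) :
    (∀ δ > (0 : ℝ), ∃ ε > (0 : ℝ), ∃ n₀ : ℕ, ∀ n ≥ n₀, ∀ E : Finset (Finset (Fin n)),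
      (∀ e ∈ E, e.card = k) → DISC k n 𝒬 d ε E → DISC k n (maxElems 𝒬) d δ E) ∧
    (∀ δ > (0 : ℝ), ∃ ε > (0 : ℝ), ∃ n₀ : ℕ, ∀ n ≥ n₀, ∀ E : Finset (Finset (Fin n)),
      (∀ e ∈ E, e.card = k) → DISC k n (maxElems 𝒬) d ε E → DISC k n 𝒬 d δ E) := by
  constructor
  · intro δ hδ
    refine ⟨δ, hδ, 0, fun n _ E _ hD => ?_⟩
    intro G
    set G' : (Q : Finset (Fin k)) → Set ({i // i ∈ Q} → Fin n) :=
      fun Q => if Q ∈ maxElems 𝒬 then G Q else Set.univ with hG'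
    have hst : supportedTuples (maxElems 𝒬) G = supportedTuples 𝒬 G' := by
      ext v
      simp only [supportedTuples, Set.mem_setOf_eq, hG']
      constructor
      · rintro ⟨hi, h⟩
        refine ⟨hi, fun Q hQ => ?_⟩
        by_cases hm : Q ∈ maxElems 𝒬 <;> simp [hm, h Q]
      · rintro ⟨hi, h⟩
        refine ⟨hi, fun Q hQ => ?_⟩
        have := h Q (Finset.mem_of_mem_filter Q hQ)
        simpa [hQ] using this
    rw [hst]
    exact hD G'
  · intro δ hδ
    refine ⟨δ, hδ, 0, fun n _ E _ hD => ?_⟩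
    intro G
    set G' : (Q : Finset (Fin k)) → Set ({i // i ∈ Q} → Fin n) :=
      fun A => {y | ∀ Q ∈ 𝒬, ∀ h : Q ⊆ A, (fun i : {i // i ∈ Q} => y ⟨i.1, h i.2⟩) ∈ G Q}
      with hG'
    have hst : supportedTuples 𝒬 G = supportedTuples (maxElems 𝒬) G' := by
      ext v
      simp only [supportedTuples, Set.mem_setOf_eq, hG']
      constructor
      · rintro ⟨hi, h⟩
        exact ⟨hi, fun A _ Q hQ hsub => h Q hQ⟩
      · rintro ⟨hi, h⟩
        refine ⟨hi, fun Q hQ => ?_⟩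
        obtain ⟨A, hA, hsub⟩ := exists_maxElem 𝒬 hQ
        exact h A hA Q hQ hsub
    rw [hst]
    exact hD G'
end

section
/- For every integer k ≥ 2, every d ∈ [0,1], and all set systems 𝒜, ℬ ⊆ 𝒫([k]) with 𝒜 ≼ ℬ, the property DISC_{ℬ,d} implies DISC_{𝒜,d}. Concretely: for every δ > 0 there exist ε > 0 and n₀ such that every n-vertex k-uniform hypergraph with n ≥ n₀ satisfying DISC_{ℬ,d}(ε) also satisfies DISC_{𝒜,d}(δ). -/
open Finset
open scoped Classical

/-- `𝒜 ≼ ℬ` implies that `DISC_{ℬ,d}` implies `DISC_{𝒜,d}`. -/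
theorem disc_mono (k : ℕ) (hk : 2 ≤ k) (d : ℝ) (hd0 : 0 ≤ d) (hd1 : d ≤ 1)
    (𝒜 ℬ : Finset (Finset (Fin k)))
    (hAB : ∃ φ : Equiv.Perm (Fin k), ∀ A ∈ 𝒜, ∃ B ∈ ℬ, Finset.image φ A ⊆ B) :
    ∀ δ > (0 : ℝ), ∃ ε > (0 : ℝ), ∃ n₀ : ℕ, ∀ n ≥ n₀, ∀ E : Finset (Finset (Fin n)),
      (∀ e ∈ E, e.card = k) → DISC k n ℬ d ε E → DISC k n 𝒜 d δ E := by
  obtain ⟨φ, hφ⟩ := hAB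
  intro δ hδ
  refine ⟨δ, hδ, 0, fun n _ E _ hdisc => ?_⟩
  intro G
  -- choice of B for each A
  have hsel0 : ∀ A : Finset (Fin k), ∃ B, A ∈ 𝒜 → (B ∈ ℬ ∧ Finset.image φ A ⊆ B) := by
    intro A
    by_cases h : A ∈ 𝒜
    · obtain ⟨B, hB, hsub⟩ := hφ A h
      exact ⟨B, fun _ => ⟨hB, hsub⟩⟩
    · exact ⟨∅, fun h' => absurd h' h⟩
  choose sel hsel using hsel0
  -- the transported system
  set G' : (Q : Finset (Fin k)) → Set ({i // i ∈ Q} → Fin n) :=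
    fun B => {y | ∀ A (hA : A ∈ 𝒜) (hB : sel A = B),
      (fun a : {i // i ∈ A} =>
        y ⟨φ a.1, hB ▸ (hsel A hA).2 (Finset.mem_image_of_mem φ a.2)⟩) ∈ G A} with hG'
  -- the bijection v ↦ v ∘ φ
  let e : (Fin k → Fin n) ≃ (Fin k → Fin n) :=
    { toFun := fun v => v ∘ φ
      invFun := fun v => v ∘ φ.symm
      left_inv := fun v => by funext i; simp
      right_inv := fun v => by funext i; simp }
  have hinj : ∀ v : Fin k → Fin n, Function.Injective (v ∘ φ) ↔ Function.Injective v :=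
    fun v => Equiv.injective_comp φ v
  have hedge : ∀ v : Fin k → Fin n, v ∈ edgeOrd k E ↔ e v ∈ edgeOrd k E := by
    intro v
    have himg : Finset.image (v ∘ φ) Finset.univ = Finset.image v Finset.univ := by
      rw [← Finset.image_image]
      congr 1
      exact Finset.image_univ_equiv φ
    constructor
    · rintro ⟨h1, h2⟩
      exact ⟨(hinj v).2 h1, by simpa [e, himg] using h2⟩
    · rintro ⟨h1, h2⟩
      exact ⟨(hinj v).1 h1, by simpa [e, himg] using h2⟩
  have hsupp : ∀ v : Fin k → Fin n,
      v ∈ supportedTuples ℬ G' ↔ e v ∈ supportedTuples 𝒜 G := by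
    intro v
    constructor
    · rintro ⟨h1, h2⟩
      refine ⟨(hinj v).2 h1, fun A hA => ?_⟩
      have := h2 (sel A) (hsel A hA).1
      exact this A hA rfl
    · rintro ⟨h1, h2⟩
      refine ⟨(hinj v).1 h1, fun B _ => ?_⟩
      intro A hA hB
      exact h2 A hA
  have hpre1 : supportedTuples ℬ G' = ⇑e ⁻¹' supportedTuples 𝒜 G := Set.ext hsupp
  have hpre2 : edgeOrd k E ∩ supportedTuples ℬ G'
      = ⇑e ⁻¹' (edgeOrd k E ∩ supportedTuples 𝒜 G) := by
    ext v
    simp only [Set.mem_inter_iff, Set.mem_preimage]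
    exact and_congr (hedge v) (hsupp v)
  have himg1 : supportedTuples 𝒜 G = ⇑e '' supportedTuples ℬ G' := by
    rw [hpre1, Set.image_preimage_eq _ e.surjective]
  have himg2 : edgeOrd k E ∩ supportedTuples 𝒜 G
      = ⇑e '' (edgeOrd k E ∩ supportedTuples ℬ G') := by
    rw [hpre2, Set.image_preimage_eq _ e.surjective]
  have hc1 : (supportedTuples 𝒜 G).ncard = (supportedTuples ℬ G').ncard := by
    rw [himg1, Set.ncard_image_of_injective _ e.injective]
  have hc2 : (edgeOrd k E ∩ supportedTuples 𝒜 G).ncard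
      = (edgeOrd k E ∩ supportedTuples ℬ G').ncard := by
    rw [himg2, Set.ncard_image_of_injective _ e.injective]
  rw [hc1, hc2]
  exact hdisc G'
end

section
/- For every integer k ≥ 2 and every set system 𝒬 ⊆ 𝒫([k]) \ {[k]}, the hypergraph M_𝒬 satisfies: (a) e(M_𝒬) = 2^{|𝒬|}; (b) for every i ∈ [k], the i-th vertex class of M_𝒬 has size |V_i(M_𝒬)| = 2^{|𝒬| − deg_𝒬(i)}, where deg_𝒬(i) is the number of sets in 𝒬 containing i; in particular v(M_𝒬) = Σ_{i=1}^{k} 2^{|𝒬| − deg_𝒬(i)}; and (c) M_𝒬 is 𝒬-simple. -/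
open Finset
open scoped Classical

lemma mvert_eq_iff {k : ℕ} (𝒬 : Finset (Finset (Fin k)))
    (a b : {Q : Finset (Fin k) // Q ∈ 𝒬} → Bool) (i : Fin k) :
    Mvert 𝒬 a i = Mvert 𝒬 b i ↔
      ∀ (Q : Finset (Fin k)) (hQ : Q ∈ 𝒬), i ∉ Q → a ⟨Q, hQ⟩ = b ⟨Q, hQ⟩ := by
  constructor
  · intro h Q hQ hi
    have h2 : (fun Q : {Q : Finset (Fin k) // Q ∈ 𝒬 ∧ i ∉ Q} => a ⟨Q.1, Q.2.1⟩)
        = fun Q => b ⟨Q.1, Q.2.1⟩ := eq_of_heq (Sigma.mk.inj_iff.mp h).2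
    exact congrFun h2 ⟨Q, hQ, hi⟩
  · intro h
    exact congrArg (Sigma.mk i) (funext fun Q => h Q.1 Q.2.1 Q.2.2)

lemma mem_MEdge {k : ℕ} (𝒬 : Finset (Finset (Fin k)))
    (a : {Q : Finset (Fin k) // Q ∈ 𝒬} → Bool) (x : MVertex k 𝒬) :
    x ∈ MEdge 𝒬 a ↔ ∃ i, Mvert 𝒬 a i = x := by
  simp [MEdge]

lemma MEdge_inj {k : ℕ} (𝒬 : Finset (Finset (Fin k))) (h𝒬 : Finset.univ ∉ 𝒬) :
    Function.Injective (MEdge 𝒬) := by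
  intro a b hab
  funext Q
  have hne : Q.1 ≠ Finset.univ := fun h => h𝒬 (h ▸ Q.2)
  have : ∃ i, i ∉ Q.1 := by
    by_contra h
    push_neg at h
    exact hne (Finset.eq_univ_iff_forall.mpr h)
  obtain ⟨i, hi⟩ := this
  have hx : Mvert 𝒬 a i ∈ MEdge 𝒬 b := by
    rw [← hab, mem_MEdge]; exact ⟨i, rfl⟩
  obtain ⟨i', hi'⟩ := (mem_MEdge 𝒬 b _).mp hx
  have hii : i' = i := congrArg Sigma.fst hi'
  subst hii
  have := (mvert_eq_iff 𝒬 b a i').mp hi' Q.1 Q.2 hi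
  obtain ⟨Q, hQ⟩ := Q
  exact this.symm

lemma card_aux {k : ℕ} (𝒬 : Finset (Finset (Fin k))) (i : Fin k) :
    Fintype.card ({Q : Finset (Fin k) // Q ∈ 𝒬 ∧ i ∉ Q} → Bool)
      = 2 ^ (𝒬.card - degQ 𝒬 i) := by
  rw [Fintype.card_fun, Fintype.card_bool, Fintype.card_subtype]
  congr 1
  have h1 : (Finset.univ.filter fun Q : Finset (Fin k) => Q ∈ 𝒬 ∧ i ∉ Q)
      = 𝒬.filter fun Q => i ∉ Q := by
    ext Q; simp
  rw [h1]
  have h2 := Finset.card_filter_add_card_filter_not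
    (s := 𝒬) (p := fun Q => i ∈ Q)
  unfold degQ
  omega

/-- basic properties of `M_𝒬`: it has `2^{|𝒬|}` edges, its `i`-th
vertex class has `2^{|𝒬| - deg_𝒬(i)}` vertices, hence
`v(M_𝒬) = ∑_i 2^{|𝒬| - deg_𝒬(i)}`, and it is `𝒬`-simple. -/
theorem M_properties (k : ℕ) (hk : 2 ≤ k) (𝒬 : Finset (Finset (Fin k)))
    (h𝒬 : Finset.univ ∉ 𝒬) :
    (MEdges 𝒬).card = 2 ^ 𝒬.card ∧
    (∀ i : Fin k,
      Fintype.card {v : MVertex k 𝒬 // v.1 = i} = 2 ^ (𝒬.card - degQ 𝒬 i)) ∧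
    Fintype.card (MVertex k 𝒬) = ∑ i : Fin k, 2 ^ (𝒬.card - degQ 𝒬 i) ∧
    QSimple 𝒬 (MEdges 𝒬) := by
  have classEquiv : ∀ i : Fin k,
      {v : MVertex k 𝒬 // v.1 = i} ≃ ({Q : Finset (Fin k) // Q ∈ 𝒬 ∧ i ∉ Q} → Bool) :=
    fun i =>
    { toFun := fun v => fun Q => v.1.2 ⟨Q.1, ⟨Q.2.1, by rw [v.2]; exact Q.2.2⟩⟩
      invFun := fun f => ⟨⟨i, f⟩, rfl⟩
      left_inv := by rintro ⟨⟨j, g⟩, rfl⟩; rfl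
      right_inv := fun f => rfl }
  refine ⟨?_, ?_, ?_, ?_⟩
  · rw [MEdges, Finset.card_image_of_injective _ (MEdge_inj 𝒬 h𝒬), Finset.card_univ,
      Fintype.card_fun, Fintype.card_bool, Fintype.card_coe]
  · intro i
    rw [Fintype.card_congr (classEquiv i), card_aux]
  · rw [Fintype.card_sigma]
    exact Finset.sum_congr rfl fun i _ => card_aux 𝒬 i
  · set e : Fin (MEdges 𝒬).card → Finset (MVertex k 𝒬) :=
      fun j => ((MEdges 𝒬).equivFin.symm j).1 with he
    have einj : Function.Injective e := fun j j' h =>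
      (MEdges 𝒬).equivFin.symm.injective (Subtype.ext h)
    refine ⟨e, fun j => ((MEdges 𝒬).equivFin.symm j).2, ?_, ?_⟩
    · intro f hf
      exact ⟨(MEdges 𝒬).equivFin ⟨f, hf⟩, congrArg Subtype.val
        ((MEdges 𝒬).equivFin.symm_apply_apply ⟨f, hf⟩)⟩
    · intro j
      have hej : e j ∈ MEdges 𝒬 := ((MEdges 𝒬).equivFin.symm j).2
      rw [MEdges, Finset.mem_image] at hej
      obtain ⟨a, -, ha⟩ := hej
      refine ⟨Mvert 𝒬 a, ?_, ?_, ?_⟩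
      · intro r r' h
        exact congrArg Sigma.fst h
      · intro r
        rw [← ha, mem_MEdge]; exact ⟨r, rfl⟩
      · intro h hlt
        have heh : e h ∈ MEdges 𝒬 := ((MEdges 𝒬).equivFin.symm h).2
        rw [MEdges, Finset.mem_image] at heh
        obtain ⟨b, -, hb⟩ := heh
        have hab : a ≠ b := by
          intro hab
          exact absurd (einj (by rw [← ha, ← hb, hab])) (ne_of_gt hlt).symm
        obtain ⟨Q, hQ⟩ := Function.ne_iff.mp hab
        refine ⟨Q.1, Q.2, fun r hr => ?_⟩
        by_contra hrQ
        obtain ⟨hr1, -⟩ := hr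
        rw [← hb, mem_MEdge] at hr1
        obtain ⟨r', hr'⟩ := hr1
        have hrr : r' = r := congrArg Sigma.fst hr'
        subst hrr
        exact hQ ((mvert_eq_iff 𝒬 b a r').mp hr' Q.1 Q.2 hrQ).symm
end
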